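/- Let f : Finset(V) × X → ℝ be a reward function that is nonnegative, adaptive monotone, and ζ-weakly adaptive submodular for some constant ζ ≥ 1. Let π_g be a greedy policy and π* any policy, both run for k ≥ 1 steps. Then f_avg(π_g, k) ≥ (1 − e^{−1/ζ}) · f_avg(π*, k); i.e., the greedy policy selecting k actions obtains at least a (1 − e^{−1/ζ}) fraction of the value of any policy selecting k actions. -/

import Mathlib

attribute [local instance] Classical.propDecidable

noncomputable section

/-- A state `x` is consistent with partial realization `ψ` if every recorded
action–outcome pair agrees with the outcome model `μ`. -/
def Consistent {X V Y : Type*} (μ : V → X → Y) (x : X) (ψ : Finset (V × Y)) : Prop :=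
  ∀ e ∈ ψ, μ e.1 x = e.2

/-- The set of actions occurring in a partial realization. -/
def acts {V Y : Type*} (ψ : Finset (V × Y)) : Finset V := ψ.image Prod.fst

/-- `P[ψ]`: total prior probability of the states consistent with `ψ`. -/
def probP {X V Y : Type*} [Fintype X] (p : X → ℝ) (μ : V → X → Y)
    (ψ : Finset (V × Y)) : ℝ :=
  ∑ x ∈ Finset.univ.filter (fun x => Consistent μ x ψ), p x

/-- Conditional expected marginal benefit `Δ(v|ψ)` of action `v` given `ψ`. -/
def margBen {X V Y : Type*} [Fintype X] (p : X → ℝ) (μ : V → X → Y)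
    (f : Finset V → X → ℝ) (v : V) (ψ : Finset (V × Y)) : ℝ :=
  (probP p μ ψ)⁻¹ *
    ∑ x ∈ Finset.univ.filter (fun x => Consistent μ x ψ),
      p x * (f (insert v (acts ψ)) x - f (acts ψ) x)

/-- Adaptive monotonicity: every conditional expected marginal benefit is nonnegative. -/
def AdaptiveMonotone {X V Y : Type*} [Fintype X] (p : X → ℝ) (μ : V → X → Y)
    (f : Finset V → X → ℝ) : Prop :=
  ∀ (v : V) (ψ : Finset (V × Y)), 0 < probP p μ ψ → 0 ≤ margBen p μ f v ψ

/-- `ζ`-weak adaptive submodularity. -/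
def WeakAdaptiveSubmodular {X V Y : Type*} [Fintype X] (p : X → ℝ) (μ : V → X → Y)
    (f : Finset V → X → ℝ) (ζ : ℝ) : Prop :=
  ∀ ψ ψ' : Finset (V × Y), ψ ⊆ ψ' → 0 < probP p μ ψ' →
    ∀ v ∉ acts ψ', margBen p μ f v ψ' ≤ ζ * margBen p μ f v ψ

/-- History of action–outcome pairs generated by running policy `π` for `t`
steps under true state `x`. -/
def hist {X V Y : Type*} (μ : V → X → Y) (π : List (V × Y) → V) (x : X) :
    ℕ → List (V × Y)
  | 0 => []
  | t + 1 =>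
      hist μ π x t ++ [(π (hist μ π x t), μ (π (hist μ π x t)) x)]

/-- The set of actions appearing in a history. -/
def actsOf {V Y : Type*} (h : List (V × Y)) : Finset V := (h.map Prod.fst).toFinset

/-- Average reward `f_avg(π, t)` of policy `π` at horizon `t`. -/
def favg {X V Y : Type*} [Fintype X] (p : X → ℝ) (μ : V → X → Y)
    (f : Finset V → X → ℝ) (π : List (V × Y) → V) (t : ℕ) : ℝ :=
  ∑ x, p x * f (actsOf (hist μ π x t)) x

/-- A greedy policy: at every history reachable under some state of positive
prior probability, the chosen action maximizes the conditional expected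
marginal benefit. -/
def IsGreedy {X V Y : Type*} [Fintype X] (p : X → ℝ) (μ : V → X → Y)
    (f : Finset V → X → ℝ) (π : List (V × Y) → V) : Prop :=
  ∀ x : X, 0 < p x → ∀ t : ℕ, ∀ v : V,
    margBen p μ f v (hist μ π x t).toFinset ≤
      margBen p μ f (π (hist μ π x t)) (hist μ π x t).toFinset

-- ====================== helper lemmas ======================

namespace GKProof

variable {X V Y : Type*} [Fintype X] (p : X → ℝ) (μ : V → X → Y)

lemma hist_succ (π : List (V × Y) → V) (x : X) (t : ℕ) :
    hist μ π x (t + 1)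
      = hist μ π x t ++ [(π (hist μ π x t), μ (π (hist μ π x t)) x)] := rfl

lemma hist_length (π : List (V × Y) → V) (x : X) (t : ℕ) :
    (hist μ π x t).length = t := by
  induction t with
  | zero => rfl
  | succ t ih => simp [hist_succ, ih]

lemma mem_hist (π : List (V × Y) → V) (x : X) (t : ℕ) :
    ∀ e ∈ hist μ π x t, μ e.1 x = e.2 := by
  induction t with
  | zero => simp [hist]
  | succ t ih =>
    intro e he
    rw [hist_succ, List.mem_append] at he
    rcases he with h | h
    · exact ih e h
    · simp at h; subst h; rfl

lemma consistent_self (π : List (V × Y) → V) (x : X) (t : ℕ) :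
    Consistent μ x (hist μ π x t).toFinset :=
  fun e he => mem_hist μ π x t e (List.mem_toFinset.mp he)

lemma consistent_mono {x : X} {ψ ψ' : Finset (V × Y)} (hsub : ψ ⊆ ψ')
    (h : Consistent μ x ψ') : Consistent μ x ψ := fun e he => h e (hsub he)

lemma hist_eq_of_consistent (π : List (V × Y) → V) {x x' : X} {t : ℕ}
    (h : Consistent μ x' (hist μ π x t).toFinset) :
    hist μ π x' t = hist μ π x t := by
  induction t with
  | zero => rfl
  | succ t ih =>
    have hsub : (hist μ π x t).toFinset ⊆ (hist μ π x (t + 1)).toFinset := by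
      intro e he
      rw [List.mem_toFinset] at he ⊢
      rw [hist_succ, List.mem_append]
      exact Or.inl he
    have heq : hist μ π x' t = hist μ π x t := ih (consistent_mono μ hsub h)
    have hlast : μ (π (hist μ π x t)) x' = μ (π (hist μ π x t)) x := by
      have hmem : (π (hist μ π x t), μ (π (hist μ π x t)) x)
          ∈ (hist μ π x (t + 1)).toFinset := by
        rw [List.mem_toFinset, hist_succ, List.mem_append]
        simp
      exact h _ hmem
    rw [hist_succ, hist_succ, heq, hlast]

lemma probP_nonneg (hp : ∀ x, 0 ≤ p x) (ψ : Finset (V × Y)) : 0 ≤ probP p μ ψ :=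
  Finset.sum_nonneg fun x _ => hp x

lemma probP_mono (hp : ∀ x, 0 ≤ p x) {ψ ψ' : Finset (V × Y)} (hsub : ψ ⊆ ψ') :
    probP p μ ψ' ≤ probP p μ ψ := by
  apply Finset.sum_le_sum_of_subset_of_nonneg
  · intro x hx
    rw [Finset.mem_filter] at hx ⊢
    exact ⟨hx.1, consistent_mono μ hsub hx.2⟩
  · intro x _ _; exact hp x

lemma exists_pos (hp : ∀ x, 0 ≤ p x) {ψ : Finset (V × Y)} (hP : 0 < probP p μ ψ) :
    ∃ x, Consistent μ x ψ ∧ 0 < p x := by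
  by_contra hcon
  push_neg at hcon
  have : probP p μ ψ ≤ 0 := by
    apply Finset.sum_nonpos
    intro x hx
    exact hcon x (Finset.mem_filter.mp hx).2
  linarith

lemma prob_mul_marg (hp : ∀ x, 0 ≤ p x) (f : Finset V → X → ℝ) (v : V)
    (ψ : Finset (V × Y)) :
    probP p μ ψ * margBen p μ f v ψ
      = ∑ x ∈ Finset.univ.filter (fun x => Consistent μ x ψ),
          p x * (f (insert v (acts ψ)) x - f (acts ψ) x) := by
  by_cases h : probP p μ ψ = 0
  · rw [h, zero_mul]
    symm
    apply Finset.sum_eq_zero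
    intro x hx
    have hx0 : p x = 0 :=
      (Finset.sum_eq_zero_iff_of_nonneg (fun y _ => hp y)).mp h x hx
    rw [hx0, zero_mul]
  · rw [margBen, ← mul_assoc, mul_inv_cancel₀ h, one_mul]

lemma marg_mem (f : Finset V → X → ℝ) {v : V} {ψ : Finset (V × Y)}
    (hv : v ∈ acts ψ) : margBen p μ f v ψ = 0 := by
  rw [margBen, Finset.insert_eq_self.mpr hv]
  simp

lemma acts_toFinset (h : List (V × Y)) : acts h.toFinset = actsOf h := by
  ext a
  simp [acts, actsOf]

lemma actsOf_snoc (h : List (V × Y)) (v : V) (y : Y) :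
    actsOf (h ++ [(v, y)]) = insert v (actsOf h) := by
  ext a
  simp [actsOf, or_comm]

lemma actsOf_append_comm (l₁ l₂ : List (V × Y)) :
    actsOf (l₁ ++ l₂) = actsOf (l₂ ++ l₁) := by
  ext a
  simp [actsOf, or_comm]

lemma sum_fiber_hist (π : List (V × Y) → V) (t : ℕ) (G : List (V × Y) → X → ℝ) :
    ∑ H ∈ Finset.univ.image (fun x => hist μ π x t),
      ∑ x ∈ Finset.univ.filter (fun x => Consistent μ x H.toFinset), p x * G H x
    = ∑ x : X, p x * G (hist μ π x t) x := by
  rw [← Finset.sum_fiberwise_of_maps_to (g := fun x => hist μ π x t)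
        (fun x _ => Finset.mem_image_of_mem _ (Finset.mem_univ x))
        (fun x => p x * G (hist μ π x t) x)]
  apply Finset.sum_congr rfl
  intro H hH
  obtain ⟨x₀, _, hx₀⟩ := Finset.mem_image.mp hH
  have hfil : Finset.univ.filter (fun x => Consistent μ x H.toFinset)
      = Finset.univ.filter (fun x => hist μ π x t = H) := by
    subst hx₀
    ext x
    simp only [Finset.mem_filter, Finset.mem_univ, true_and]
    constructor
    · exact fun h => hist_eq_of_consistent μ π h
    · intro h
      rw [← h]
      exact consistent_self μ π x t
  rw [hfil]
  apply Finset.sum_congr rfl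
  intro x hx
  rw [(Finset.mem_filter.mp hx).2]

lemma favg_succ_sub (f : Finset V → X → ℝ) (π : List (V × Y) → V) (t : ℕ) :
    favg p μ f π (t + 1) - favg p μ f π t
      = ∑ x : X, p x *
          (f (insert (π (hist μ π x t)) (acts (hist μ π x t).toFinset)) x
            - f (acts (hist μ π x t).toFinset) x) := by
  rw [favg, favg, ← Finset.sum_sub_distrib]
  apply Finset.sum_congr rfl
  intro x _
  rw [acts_toFinset, mul_sub]
  congr 2
  rw [hist_succ, actsOf_snoc]

lemma favg_step_eq (hp : ∀ x, 0 ≤ p x) (f : Finset V → X → ℝ)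
    (π : List (V × Y) → V) (t : ℕ) :
    favg p μ f π (t + 1) - favg p μ f π t
      = ∑ H ∈ Finset.univ.image (fun x => hist μ π x t),
          probP p μ H.toFinset * margBen p μ f (π H) H.toFinset := by
  rw [favg_succ_sub p μ f π t,
    ← sum_fiber_hist p μ π t
      (fun h x => f (insert (π h) (acts h.toFinset)) x - f (acts h.toFinset) x)]
  apply Finset.sum_congr rfl
  intro H _
  rw [prob_mul_marg p μ hp f]

lemma favg_mono_step (hp : ∀ x, 0 ≤ p x) (f : Finset V → X → ℝ)
    (hmono : AdaptiveMonotone p μ f) (π : List (V × Y) → V) (t : ℕ) :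
    favg p μ f π t ≤ favg p μ f π (t + 1) := by
  have h := favg_step_eq p μ hp f π t
  have h2 : 0 ≤ ∑ H ∈ Finset.univ.image (fun x => hist μ π x t),
      probP p μ H.toFinset * margBen p μ f (π H) H.toFinset := by
    apply Finset.sum_nonneg
    intro H _
    rcases (probP_nonneg p μ hp H.toFinset).eq_or_lt with hP | hP
    · rw [← hP, zero_mul]
    · exact mul_nonneg hP.le (hmono _ _ hP)
  linarith

def cat (i : ℕ) (π₁ π₂ : List (V × Y) → V) : List (V × Y) → V :=
  fun h => if h.length < i then π₁ h else π₂ (h.drop i)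

lemma hist_cat_le (π₁ π₂ : List (V × Y) → V) (x : X) {t i : ℕ} (ht : t ≤ i) :
    hist μ (cat i π₁ π₂) x t = hist μ π₁ x t := by
  induction t with
  | zero => rfl
  | succ t ih =>
    have h1 : hist μ (cat i π₁ π₂) x t = hist μ π₁ x t :=
      ih (le_trans (Nat.le_succ t) ht)
    rw [hist_succ, hist_succ, h1]
    have hcat : cat i π₁ π₂ (hist μ π₁ x t) = π₁ (hist μ π₁ x t) := by
      have : (hist μ π₁ x t).length < i := by
        rw [hist_length]
        exact Nat.lt_of_succ_le ht
      simp [cat, this]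
    rw [hcat]

lemma hist_cat_add (π₁ π₂ : List (V × Y) → V) (x : X) (i j : ℕ) :
    hist μ (cat i π₁ π₂) x (i + j) = hist μ π₁ x i ++ hist μ π₂ x j := by
  induction j with
  | zero =>
    show hist μ (cat i π₁ π₂) x i = hist μ π₁ x i ++ hist μ π₂ x 0
    rw [show hist μ π₂ x 0 = [] from rfl, List.append_nil]
    exact hist_cat_le μ π₁ π₂ x le_rfl
  | succ j ih =>
    show hist μ (cat i π₁ π₂) x ((i + j) + 1) = _
    rw [hist_succ, ih]
    have hcat : cat i π₁ π₂ (hist μ π₁ x i ++ hist μ π₂ x j)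
        = π₂ (hist μ π₂ x j) := by
      have hlen : (hist μ π₁ x i ++ hist μ π₂ x j).length = i + j := by
        simp [hist_length]
      have hnl : ¬ (hist μ π₁ x i ++ hist μ π₂ x j).length < i := by
        rw [hlen]; omega
      rw [cat]
      simp only [hnl, if_false]
      rw [List.drop_left' (hist_length μ π₁ x i)]
    rw [hcat, hist_succ, List.append_assoc]

lemma take_hist_cat (π₁ π₂ : List (V × Y) → V) (x : X) (i j : ℕ) :
    (hist μ (cat i π₁ π₂) x (i + j)).take i = hist μ π₁ x i := by
  rw [hist_cat_add, List.take_left' (hist_length μ π₁ x i)]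

lemma key_step (hp : ∀ x, 0 ≤ p x) (f : Finset V → X → ℝ)
    (hmono : AdaptiveMonotone p μ f)
    {ζ : ℝ} (hζ : 1 ≤ ζ) (hsub : WeakAdaptiveSubmodular p μ f ζ)
    (πg πs : List (V × Y) → V) (hg : IsGreedy p μ f πg) (i j : ℕ) :
    favg p μ f (cat i πg πs) (i + j + 1) - favg p μ f (cat i πg πs) (i + j)
      ≤ ζ * (favg p μ f πg (i + 1) - favg p μ f πg i) := by
  set σ := cat i πg πs with hσ
  set m : List (V × Y) → ℝ :=
    fun G => margBen p μ f (πg G) G.toFinset with hm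
  have hT : ∑ H ∈ Finset.univ.image (fun x => hist μ σ x (i + j)),
      probP p μ H.toFinset * m (H.take i)
      = favg p μ f πg (i + 1) - favg p μ f πg i := by
    calc ∑ H ∈ Finset.univ.image (fun x => hist μ σ x (i + j)),
          probP p μ H.toFinset * m (H.take i)
        = ∑ H ∈ Finset.univ.image (fun x => hist μ σ x (i + j)),
            ∑ x ∈ Finset.univ.filter (fun x => Consistent μ x H.toFinset),
              p x * m (H.take i) := by
          apply Finset.sum_congr rfl
          intro H _
          rw [probP, Finset.sum_mul]
      _ = ∑ x : X, p x * m ((hist μ σ x (i + j)).take i) :=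
          sum_fiber_hist p μ σ (i + j) (fun h _ => m (h.take i))
      _ = ∑ x : X, p x * m (hist μ πg x i) := by
          apply Finset.sum_congr rfl
          intro x _
          rw [take_hist_cat]
      _ = ∑ G ∈ Finset.univ.image (fun x => hist μ πg x i),
            ∑ x ∈ Finset.univ.filter (fun x => Consistent μ x G.toFinset),
              p x * m G :=
          (sum_fiber_hist p μ πg i (fun h _ => m h)).symm
      _ = ∑ G ∈ Finset.univ.image (fun x => hist μ πg x i),
            probP p μ G.toFinset * m G := by
          apply Finset.sum_congr rfl
          intro G _
          rw [probP, Finset.sum_mul]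
      _ = favg p μ f πg (i + 1) - favg p μ f πg i :=
          (favg_step_eq p μ hp f πg i).symm
  rw [favg_step_eq p μ hp f σ (i + j)]
  have hbound : ∀ H ∈ Finset.univ.image (fun x => hist μ σ x (i + j)),
      probP p μ H.toFinset * margBen p μ f (σ H) H.toFinset
        ≤ ζ * (probP p μ H.toFinset * m (H.take i)) := by
    intro H hH
    obtain ⟨x₀, _, hx₀⟩ := Finset.mem_image.mp hH
    have hGH : H = hist μ πg x₀ i ++ hist μ πs x₀ j := by
      rw [← hx₀, hσ, hist_cat_add]
    have htake : H.take i = hist μ πg x₀ i := by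
      rw [← hx₀, hσ, take_hist_cat]
    rw [htake]
    set G := hist μ πg x₀ i with hGdef
    have hsubG : G.toFinset ⊆ H.toFinset := by
      rw [hGH, List.toFinset_append]
      exact Finset.subset_union_left
    rcases (probP_nonneg p μ hp H.toFinset).eq_or_lt with hP | hP
    · rw [← hP]; simp
    · have hPG : 0 < probP p μ G.toFinset :=
        lt_of_lt_of_le hP (probP_mono p μ hp hsubG)
      obtain ⟨x₁, hx₁c, hx₁p⟩ := exists_pos p μ hp hP
      have hx₁G : hist μ πg x₁ i = G :=
        hist_eq_of_consistent μ πg (consistent_mono μ hsubG hx₁c)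
      have hgre : ∀ v, margBen p μ f v G.toFinset ≤ m G := by
        intro v
        have := hg x₁ hx₁p i v
        rwa [hx₁G] at this
      have hmg : 0 ≤ m G := hmono _ _ hPG
      by_cases hv : σ H ∈ acts H.toFinset
      · rw [marg_mem p μ f hv, mul_zero]
        have hζ0 : (0:ℝ) ≤ ζ := le_trans zero_le_one hζ
        exact mul_nonneg hζ0 (mul_nonneg (probP_nonneg p μ hp _) hmg)
      · have h1 : margBen p μ f (σ H) H.toFinset
            ≤ ζ * margBen p μ f (σ H) G.toFinset :=
          hsub G.toFinset H.toFinset hsubG hP _ hv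
        have hζ0 : (0:ℝ) ≤ ζ := le_trans zero_le_one hζ
        have h2 : ζ * margBen p μ f (σ H) G.toFinset ≤ ζ * m G :=
          mul_le_mul_of_nonneg_left (hgre _) hζ0
        calc probP p μ H.toFinset * margBen p μ f (σ H) H.toFinset
            ≤ probP p μ H.toFinset * (ζ * m G) :=
              mul_le_mul_of_nonneg_left (h1.trans h2) (probP_nonneg p μ hp _)
          _ = ζ * (probP p μ H.toFinset * m G) := by ring
  calc ∑ H ∈ Finset.univ.image (fun x => hist μ σ x (i + j)),
        probP p μ H.toFinset * margBen p μ f (σ H) H.toFinset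
      ≤ ∑ H ∈ Finset.univ.image (fun x => hist μ σ x (i + j)),
          ζ * (probP p μ H.toFinset * m (H.take i)) :=
        Finset.sum_le_sum hbound
    _ = ζ * ∑ H ∈ Finset.univ.image (fun x => hist μ σ x (i + j)),
          probP p μ H.toFinset * m (H.take i) :=
        (Finset.mul_sum _ _ _).symm
    _ = ζ * (favg p μ f πg (i + 1) - favg p μ f πg i) := by rw [hT]

end GKProof


open GKProof

/-- the greedy policy selecting `k` actions obtains at least a
`(1 - e^{-1/ζ})` fraction of the value of any policy selecting `k` actions. -/
theorem greedy_near_optimal_same_horizon {X V Y : Type*}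
    [Fintype X] [Nonempty X] [Fintype V] [Nonempty V] [Fintype Y] [Nonempty Y]
    (p : X → ℝ) (hp : ∀ x, 0 ≤ p x) (hpsum : ∑ x, p x = 1)
    (μ : V → X → Y) (f : Finset V → X → ℝ)
    (hf : ∀ (A : Finset V) (x : X), 0 ≤ f A x)
    (hmono : AdaptiveMonotone p μ f)
    (ζ : ℝ) (hζ : 1 ≤ ζ)
    (hsub : WeakAdaptiveSubmodular p μ f ζ)
    (πg πs : List (V × Y) → V) (hg : IsGreedy p μ f πg)
    (k : ℕ) (hk : 1 ≤ k) :
    (1 - Real.exp (-1 / ζ)) * favg p μ f πs k ≤ favg p μ f πg k := by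
  set g : ℕ → ℝ := fun t => favg p μ f πg t with hgdef
  set s : ℝ := favg p μ f πs k with hsdef
  have hs0 : 0 ≤ s :=
    Finset.sum_nonneg fun x _ => mul_nonneg (hp x) (hf _ x)
  have hg00 : 0 ≤ g 0 :=
    Finset.sum_nonneg fun x _ => mul_nonneg (hp x) (hf _ x)
  have hk0 : (0:ℝ) < (k:ℝ) := by exact_mod_cast Nat.lt_of_lt_of_le Nat.zero_lt_one hk
  have hζ0 : (0:ℝ) < ζ := lt_of_lt_of_le one_pos hζ
  have hd0 : (0:ℝ) < ζ * (k:ℝ) := mul_pos hζ0 hk0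
  have hd1 : (1:ℝ) ≤ ζ * (k:ℝ) := by
    have hk1 : (1:ℝ) ≤ (k:ℝ) := by exact_mod_cast hk
    nlinarith
  -- key inequality
  have key : ∀ i : ℕ, s ≤ g i + ζ * (k:ℝ) * (g (i + 1) - g i) := by
    intro i
    set τ := cat k πs πg with hτ
    set σ := cat i πg πs with hσ
    have h1 : s = favg p μ f τ k := by
      rw [hsdef, favg, favg]
      apply Finset.sum_congr rfl
      intro x _
      rw [hist_cat_le μ πs πg x le_rfl]
    have h2 : favg p μ f τ k ≤ favg p μ f τ (k + i) :=
      monotone_nat_of_le_succ (favg_mono_step p μ hp f hmono τ) (Nat.le_add_right k i)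
    have h3 : favg p μ f τ (k + i) = favg p μ f σ (i + k) := by
      rw [favg, favg]
      apply Finset.sum_congr rfl
      intro x _
      rw [hτ, hσ, hist_cat_add μ πs πg x k i, hist_cat_add μ πg πs x i k,
        actsOf_append_comm]
    have h4 : ∑ j ∈ Finset.range k,
        (favg p μ f σ (i + (j + 1)) - favg p μ f σ (i + j))
        = favg p μ f σ (i + k) - favg p μ f σ (i + 0) :=
      Finset.sum_range_sub (fun j => favg p μ f σ (i + j)) k
    have h5 : ∑ j ∈ Finset.range k,
        (favg p μ f σ (i + (j + 1)) - favg p μ f σ (i + j))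
        ≤ (k:ℝ) * (ζ * (g (i + 1) - g i)) := by
      calc ∑ j ∈ Finset.range k,
            (favg p μ f σ (i + (j + 1)) - favg p μ f σ (i + j))
          ≤ ∑ _j ∈ Finset.range k, ζ * (g (i + 1) - g i) := by
            apply Finset.sum_le_sum
            intro j _
            exact key_step p μ hp f hmono hζ hsub πg πs hg i j
        _ = (k:ℝ) * (ζ * (g (i + 1) - g i)) := by
            rw [Finset.sum_const, Finset.card_range, nsmul_eq_mul]
    have h6 : favg p μ f σ (i + 0) = g i := by
      rw [hgdef]
      simp only [Nat.add_zero]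
      rw [favg, favg]
      apply Finset.sum_congr rfl
      intro x _
      rw [hσ, hist_cat_le μ πg πs x le_rfl]
    have hmul : (k:ℝ) * (ζ * (g (i + 1) - g i)) = ζ * (k:ℝ) * (g (i + 1) - g i) := by
      ring
    linarith [h2, h3.le, h4, h5, h6]
  -- recursion
  set c : ℝ := 1 - 1 / (ζ * (k:ℝ)) with hcdef
  have hc0 : 0 ≤ c := by
    rw [hcdef, sub_nonneg, div_le_one hd0]
    exact hd1
  have hrec : ∀ i : ℕ, s - g i ≤ c ^ i * s := by
    intro i
    induction i with
    | zero => simpa using (by linarith : s - g 0 ≤ s)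
    | succ i ih =>
      have hki := key i
      have hdd : (ζ * (k:ℝ)) * (1 / (ζ * (k:ℝ))) = 1 :=
        mul_one_div_cancel (ne_of_gt hd0)
      have step : s - g (i + 1) ≤ c * (s - g i) := by
        have h7 := mul_le_mul_of_nonneg_left hki
          (le_of_lt (one_div_pos.mpr hd0))
        have h8 : 1 / (ζ * (k:ℝ)) * s
            ≤ 1 / (ζ * (k:ℝ)) * g i + (g (i + 1) - g i) := by
          have hrw : 1 / (ζ * (k:ℝ)) * (g i + ζ * (k:ℝ) * (g (i + 1) - g i))
              = 1 / (ζ * (k:ℝ)) * g i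
                + (ζ * (k:ℝ) * (1 / (ζ * (k:ℝ)))) * (g (i + 1) - g i) := by
            ring
          rw [hrw, hdd, one_mul] at h7
          exact h7
        have hexp2 : c * (s - g i)
            = s - g i - 1 / (ζ * (k:ℝ)) * s + 1 / (ζ * (k:ℝ)) * g i := by
          rw [hcdef]; ring
        rw [hexp2]
        linarith [h8]
      calc s - g (i + 1) ≤ c * (s - g i) := step
        _ ≤ c * (c ^ i * s) := mul_le_mul_of_nonneg_left ih hc0
        _ = c ^ (i + 1) * s := by ring
  have hfin := hrec k
  have hcexp : c ≤ Real.exp (-(1 / (ζ * (k:ℝ)))) := by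
    have := Real.add_one_le_exp (-(1 / (ζ * (k:ℝ))))
    rw [hcdef]; linarith
  have hpow : c ^ k ≤ Real.exp (-(1 / (ζ * (k:ℝ)))) ^ k :=
    pow_le_pow_left₀ hc0 hcexp k
  have hexp : Real.exp (-(1 / (ζ * (k:ℝ)))) ^ k = Real.exp (-1 / ζ) := by
    rw [← Real.exp_nat_mul]
    congr 1
    have hk0' : (k:ℝ) ≠ 0 := ne_of_gt hk0
    have hζ' : ζ ≠ 0 := ne_of_gt hζ0
    field_simp
  have h8 : c ^ k * s ≤ Real.exp (-1 / ζ) * s := by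
    rw [← hexp]
    exact mul_le_mul_of_nonneg_right hpow hs0
  have hexpand : (1 - Real.exp (-1 / ζ)) * s = s - Real.exp (-1 / ζ) * s := by ring
  linarith [hfin, h8]
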